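/- Let V be a real vector space and a₁, …, a_{n+1} arbitrary elements of V (n ≥ 1). Define e₁ := a₁ + a₂, f₁ := a₁ − a₂, and for 2 ≤ k ≤ n, f_k := −√(2/(k(k−1))) · (a₁ + ⋯ + a_k − (k−1)·a_{k+1}). Then in the exterior algebra Λ(V), e₁ ∧ f₁ ∧ f₂ ∧ ⋯ ∧ f_n = −( (√2)^{n+1} / √n ) · a₁ ∧ a₂ ∧ ⋯ ∧ a_{n+1}. -/

import Mathlib

open Fin.NatCast

lemma prod_mul_ι_self {V : Type*} [AddCommGroup V] [Module ℝ V]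
    {k : ℕ} (v : Fin k → V) (i : Fin k) :
    (List.ofFn fun j => ExteriorAlgebra.ι ℝ (v j)).prod * ExteriorAlgebra.ι ℝ (v i) = 0 := by
  have h := (ExteriorAlgebra.ιMulti ℝ (k+1)).map_eq_zero_of_eq
      (Fin.snoc v (v i)) (i := i.castSucc) (j := Fin.last k)
      (by simp) (by simp [Fin.ext_iff, i.isLt.ne])
  rw [ExteriorAlgebra.ιMulti_apply, List.ofFn_succ'] at h
  simpa using h

lemma coeff_step (m : ℕ) (hm : 1 ≤ m) :
    (-(Real.sqrt 2 ^ (m+1) / Real.sqrt m)) * (-(Real.sqrt (2 / (((m:ℝ)+1) * m)))) * (-(m:ℝ))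
      = -(Real.sqrt 2 ^ (m+2) / Real.sqrt ((m:ℝ)+1)) := by
  have hm0 : (0:ℝ) < m := by exact_mod_cast hm
  have hs : (0:ℝ) < Real.sqrt m := Real.sqrt_pos.2 hm0
  have ht : (0:ℝ) < Real.sqrt ((m:ℝ)+1) := Real.sqrt_pos.2 (by linarith)
  have hss : Real.sqrt m * Real.sqrt m = (m:ℝ) := Real.mul_self_sqrt hm0.le
  have h1 : Real.sqrt (2 / (((m:ℝ)+1) * m)) = Real.sqrt 2 / (Real.sqrt ((m:ℝ)+1) * Real.sqrt m) := by
    rw [Real.sqrt_div (by norm_num), Real.sqrt_mul (by positivity)]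
  rw [h1]
  field_simp
  linear_combination (Real.sqrt 2 ^ (m+2)) * hss

/-- for arbitrary `a₁,…,a_{n+1}` in a real vector space, with
`e₁ = a₁ + a₂`, `f₁ = a₁ − a₂` and `f_k = −√(2/(k(k−1)))·(a₁ + ⋯ + a_k − (k−1)a_{k+1})`
for `2 ≤ k ≤ n`, one has in the exterior algebra
`e₁ ∧ f₁ ∧ ⋯ ∧ f_n = −((√2)^{n+1}/√n) · a₁ ∧ ⋯ ∧ a_{n+1}`. -/
theorem stmt_10 {V : Type*} [AddCommGroup V] [Module ℝ V]
    (n : ℕ) (hn : 1 ≤ n) (a : Fin (n + 1) → V)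
    (e1 : V) (he1 : e1 = a 0 + a 1)
    (f : ℕ → V) (hf1 : f 1 = a 0 - a 1)
    (hfk : ∀ k, 2 ≤ k → k ≤ n →
      f k = (-(Real.sqrt (2 / ((k : ℝ) * ((k : ℝ) - 1))))) •
        ((∑ j ∈ Finset.range k, a (j : Fin (n + 1))) - ((k : ℝ) - 1) • a (k : Fin (n + 1)))) :
    ExteriorAlgebra.ι ℝ e1 *
        (List.ofFn fun k : Fin n => ExteriorAlgebra.ι ℝ (f ((k : ℕ) + 1))).prod =
      (-(Real.sqrt 2 ^ (n + 1) / Real.sqrt n)) •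
        (List.ofFn fun i : Fin (n + 1) => ExteriorAlgebra.ι ℝ (a i)).prod := by
  have key : ∀ m : ℕ, 1 ≤ m → m ≤ n →
      ExteriorAlgebra.ι ℝ e1 *
          (List.ofFn fun k : Fin m => ExteriorAlgebra.ι ℝ (f ((k : ℕ) + 1))).prod =
        (-(Real.sqrt 2 ^ (m + 1) / Real.sqrt m)) •
          (List.ofFn fun i : Fin (m + 1) =>
            ExteriorAlgebra.ι ℝ (a (((i : ℕ)) : Fin (n + 1)))).prod := by
    intro m hm
    induction m, hm using Nat.le_induction with
    | base =>
      intro _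
      have hA0 : (((0:ℕ)) : Fin (n+1)) = 0 := Nat.cast_zero
      have hA1 : (((1:ℕ)) : Fin (n+1)) = 1 := Nat.cast_one
      simp only [List.ofFn_succ, List.ofFn_zero, List.prod_cons, List.prod_nil, mul_one,
        Fin.val_zero, Fin.val_succ, Fin.val_eq_zero, zero_add, hA0, hA1]
      rw [hf1, he1]
      have hsum := ExteriorAlgebra.ι_sq_zero (R := ℝ) (a 0 + a 1)
      rw [map_add, add_mul, mul_add, mul_add, ExteriorAlgebra.ι_sq_zero,
        ExteriorAlgebra.ι_sq_zero] at hsum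
      have hswap : ExteriorAlgebra.ι ℝ (a 1) * ExteriorAlgebra.ι ℝ (a 0)
          = -(ExteriorAlgebra.ι ℝ (a 0) * ExteriorAlgebra.ι ℝ (a 1)) := by
        have h' : ExteriorAlgebra.ι ℝ (a 0) * ExteriorAlgebra.ι ℝ (a 1)
            + ExteriorAlgebra.ι ℝ (a 1) * ExteriorAlgebra.ι ℝ (a 0) = 0 := by
          simp only [zero_add, add_zero] at hsum; exact hsum
        exact eq_neg_of_add_eq_zero_right h'
      rw [map_add, map_sub, add_mul, mul_sub, mul_sub, ExteriorAlgebra.ι_sq_zero,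
        ExteriorAlgebra.ι_sq_zero, hswap]
      have hc : -(Real.sqrt 2 ^ (1 + 1) / Real.sqrt (1:ℕ)) = (-2 : ℝ) := by
        rw [Nat.cast_one, Real.sqrt_one, Real.sq_sqrt (by norm_num : (0:ℝ) ≤ 2)]
        norm_num
      rw [hc]
      module
    | succ m hm ih =>
      intro hle
      have hmn : m ≤ n := by omega
      have IH := ih hmn
      have hlist : (List.ofFn fun k : Fin (m+1) => ExteriorAlgebra.ι ℝ (f ((k : ℕ) + 1))).prod
          = (List.ofFn fun k : Fin m => ExteriorAlgebra.ι ℝ (f ((k : ℕ) + 1))).prod *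
              ExteriorAlgebra.ι ℝ (f (m + 1)) := by
        rw [List.ofFn_succ', List.prod_concat]
        simp
      have hlist2 : (List.ofFn fun i : Fin (m+2) =>
            ExteriorAlgebra.ι ℝ (a (((i : ℕ)) : Fin (n + 1)))).prod
          = (List.ofFn fun i : Fin (m+1) =>
              ExteriorAlgebra.ι ℝ (a (((i : ℕ)) : Fin (n + 1)))).prod *
              ExteriorAlgebra.ι ℝ (a (((m+1 : ℕ)) : Fin (n + 1))) := by
        rw [List.ofFn_succ', List.prod_concat]
        simp
      rw [hlist, ← mul_assoc, IH, hlist2]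
      have hcast : ((m+1:ℕ):ℝ) = (m:ℝ)+1 := by push_cast; ring
      have hf := hfk (m+1) (by omega) hle
      rw [hcast, show ((m:ℝ)+1) - 1 = (m:ℝ) by ring] at hf
      rw [hf, map_smul, map_sub, map_smul, map_sum]
      set P : ExteriorAlgebra ℝ V := (List.ofFn fun i : Fin (m+1) =>
        ExteriorAlgebra.ι ℝ (a (((i : ℕ)) : Fin (n + 1)))).prod with hP
      have hzero : P * (∑ j ∈ Finset.range (m+1),
          ExteriorAlgebra.ι ℝ (a ((j : ℕ) : Fin (n + 1)))) = 0 := by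
        rw [Finset.mul_sum]
        refine Finset.sum_eq_zero fun j hj => ?_
        exact prod_mul_ι_self
          (fun i : Fin (m+1) => a (((i : ℕ)) : Fin (n + 1))) ⟨j, Finset.mem_range.1 hj⟩
      rw [smul_mul_assoc, mul_smul_comm, mul_sub, hzero, zero_sub, mul_smul_comm,
        ← neg_smul, smul_smul, smul_smul]
      rw [coeff_step m hm, hcast]
  have h := key n hn le_rfl
  have ha : (fun i : Fin (n+1) => ExteriorAlgebra.ι ℝ (a (((i : ℕ)) : Fin (n + 1))))
      = fun i : Fin (n+1) => ExteriorAlgebra.ι ℝ (a i) := by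
    funext i
    rw [Fin.cast_val_eq_self]
  rw [ha] at h
  exact h
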